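/- Assume the maximum setup: u, v : ℝ^d → ℝ are bounded Borel measurable, φ : [0,∞) → ℝ is C² with φ' ≥ 0 and φ'' ≤ 0, and ψ(x,y) := u(x) − v(y) − φ(‖x−y‖) attains a global maximum at (x̄, ȳ) with x̄ ≠ ȳ; set a := x̄ − ȳ, â := a/‖a‖ and p := φ'(‖a‖)·â. Let δ₀, η ∈ (0,1) satisfy 1 − η − δ₀ > 0, set δ := ‖a‖δ₀ and η̃ := (1−η−δ₀)/(1+δ₀). Let μ₁, μ₂ be nonnegative Borel measures on ℝ^d, and assume all integrands appearing below are integrable with respect to the indicated measures on C_{η,δ}(a). Then ∫_{C_{η,δ}(a)} (u(x̄+z) − u(x̄) − ⟨p, z⟩) dμ₁(z) − ∫_{C_{η,δ}(a)} (v(ȳ+z) − v(ȳ) − ⟨p, z⟩) dμ₂(z) ≤ (1/2) ∫_{C_{η,δ}(a)} sup_{s∈[−1,1]} ( (1−η̃²)·φ'(‖a+sz‖)/‖a+sz‖ + η̃²·φ''(‖a+sz‖) ) ‖z‖² d(μ₁+μ₂)(z). -/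

import Mathlib

open MeasureTheory RealInnerProductSpace Set

set_option maxHeartbeats 1600000 in
lemma aux_cone {d : ℕ}
    (φ : ℝ → ℝ) (hφ : ContDiff ℝ 2 φ)
    (hφ' : ∀ t : ℝ, 0 ≤ t → 0 ≤ deriv φ t)
    (hφ'' : ∀ t : ℝ, 0 ≤ t → deriv (deriv φ) t ≤ 0)
    (a w : EuclideanSpace ℝ (Fin d)) (ha : a ≠ 0)
    (δ₀ η et : ℝ) (hδ₀ : δ₀ ∈ Ioo (0:ℝ) 1) (hη : η ∈ Ioo (0:ℝ) 1)
    (hηδ₀ : 0 < 1 - η - δ₀) (het : et = (1 - η - δ₀) / (1 + δ₀))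
    (hw1 : ‖w‖ ≤ ‖a‖ * δ₀) (hw2 : (1 - η) * ‖w‖ * ‖a‖ ≤ |⟪a, w⟫|) :
    φ ‖a + w‖ - φ ‖a‖ - deriv φ ‖a‖ * (‖a‖⁻¹ * ⟪a, w⟫)
      ≤ (1 / 2) * ((⨆ s : Icc (-1:ℝ) 1,
          ((1 - et ^ 2) * deriv φ ‖a + (s : ℝ) • w‖ / ‖a + (s : ℝ) • w‖
            + et ^ 2 * deriv (deriv φ) ‖a + (s : ℝ) • w‖)) * ‖w‖ ^ 2) := by
  have hA : (0:ℝ) < ‖a‖ := norm_pos_iff.mpr ha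
  have h1δ : (0:ℝ) < 1 + δ₀ := by linarith [hδ₀.1]
  have hW0 : (0:ℝ) ≤ ‖w‖ := norm_nonneg _
  obtain ⟨r, hrdef⟩ : ∃ r : ℝ → ℝ, r = fun s => ‖a + s • w‖ := ⟨_, rfl⟩
  obtain ⟨q, hqdef⟩ : ∃ q : ℝ → ℝ, q = fun s => ⟪a, w⟫ + s * ‖w‖ ^ 2 := ⟨_, rfl⟩
  have hrex : ∀ t : ℝ, r t = ‖a + t • w‖ := fun t => by rw [hrdef]
  have hqex : ∀ t : ℝ, q t = ⟪a, w⟫ + t * ‖w‖ ^ 2 := fun t => by rw [hqdef]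
  have hQ : ∀ s : ℝ, r s ^ 2 = ‖a‖ ^ 2 + 2 * s * ⟪a, w⟫ + s ^ 2 * ‖w‖ ^ 2 := by
    intro s
    rw [hrex, norm_add_sq_real, real_inner_smul_right, norm_smul]
    simp only [Real.norm_eq_abs, mul_pow, sq_abs]
    ring
  have hrQ : ∀ s : ℝ, r s = Real.sqrt (‖a‖ ^ 2 + 2 * s * ⟪a, w⟫ + s ^ 2 * ‖w‖ ^ 2) := by
    intro s
    rw [← hQ s, Real.sqrt_sq]
    rw [hrex]; exact norm_nonneg _
  have hsmul : ∀ s : ℝ, |s| ≤ 1 → ‖s • w‖ ≤ ‖a‖ * δ₀ := by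
    intro s hs
    rw [norm_smul, Real.norm_eq_abs]
    calc |s| * ‖w‖ ≤ 1 * ‖w‖ := mul_le_mul_of_nonneg_right hs (norm_nonneg _)
      _ ≤ ‖a‖ * δ₀ := by rw [one_mul]; exact hw1
  have hrlow : ∀ s : ℝ, |s| ≤ 1 → ‖a‖ * (1 - δ₀) ≤ r s := by
    intro s hs
    have h1 : ‖a‖ ≤ r s + ‖s • w‖ := by
      rw [hrex]
      have := norm_add_le (a + s • w) (-(s • w))
      simpa using this
    have h2 := hsmul s hs
    nlinarith
  have hr0 : ∀ s : ℝ, |s| ≤ 1 → 0 < r s := by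
    intro s hs
    have := hrlow s hs
    nlinarith [hδ₀.2, hδ₀.1]
  have hrup : ∀ s : ℝ, |s| ≤ 1 → r s ≤ (1 + δ₀) * ‖a‖ := by
    intro s hs
    have h1 : r s ≤ ‖a‖ + ‖s • w‖ := by rw [hrex]; exact norm_add_le _ _
    have h2 := hsmul s hs
    nlinarith
  have hφ2 : ContDiff ℝ (1 + 1) φ := by norm_num; exact hφ
  have hd1 : Differentiable ℝ φ := (contDiff_succ_iff_deriv.mp hφ2).1
  have hφ'c : ContDiff ℝ 1 (deriv φ) := (contDiff_succ_iff_deriv.mp hφ2).2.2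
  have hd2 : Differentiable ℝ (deriv φ) := (contDiff_one_iff_deriv.mp hφ'c).1
  have hφ''cont : Continuous (deriv (deriv φ)) := (contDiff_one_iff_deriv.mp hφ'c).2
  have hrd : ∀ s : ℝ, |s| ≤ 1 → HasDerivAt r (q s / r s) s := by
    intro s hs
    have hQd : HasDerivAt (fun s : ℝ => ‖a‖ ^ 2 + 2 * s * ⟪a, w⟫ + s ^ 2 * ‖w‖ ^ 2)
        (2 * q s) s := by
      have h1 : HasDerivAt (fun s : ℝ => 2 * s * ⟪a, w⟫) (2 * ⟪a, w⟫) s := by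
        simpa using (((hasDerivAt_id s).const_mul (2:ℝ)).mul_const ⟪a, w⟫)
      have h2 : HasDerivAt (fun s : ℝ => s ^ 2 * ‖w‖ ^ 2) (2 * s * ‖w‖ ^ 2) s := by
        simpa using ((hasDerivAt_pow 2 s).mul_const (‖w‖ ^ 2))
      have h3 := ((h1.const_add (‖a‖ ^ 2)).add h2)
      have h4 : 2 * q s = 2 * ⟪a, w⟫ + 2 * s * ‖w‖ ^ 2 := by rw [hqex]; ring
      rw [h4]; exact h3
    have hQpos : (0:ℝ) < ‖a‖ ^ 2 + 2 * s * ⟪a, w⟫ + s ^ 2 * ‖w‖ ^ 2 := by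
      rw [← hQ s]; exact pow_pos (hr0 s hs) 2
    have h := (Real.hasDerivAt_sqrt (ne_of_gt hQpos)).comp s hQd
    have heq : r = fun t => Real.sqrt (‖a‖ ^ 2 + 2 * t * ⟪a, w⟫ + t ^ 2 * ‖w‖ ^ 2) :=
      funext hrQ
    have h2 : HasDerivAt r
        (1 / (2 * Real.sqrt (‖a‖ ^ 2 + 2 * s * ⟪a, w⟫ + s ^ 2 * ‖w‖ ^ 2)) * (2 * q s)) s := by
      rw [heq]; exact h
    convert h2 using 1
    rw [← hrQ s]
    have hne : r s ≠ 0 := (hr0 s hs).ne'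
    field_simp
  obtain ⟨f, hfdef⟩ : ∃ f : ℝ → ℝ, f = fun s => φ (r s) := ⟨_, rfl⟩
  obtain ⟨f1, hf1def⟩ : ∃ f1 : ℝ → ℝ, f1 = fun s => deriv φ (r s) * (q s / r s) := ⟨_, rfl⟩
  obtain ⟨f2, hf2def⟩ : ∃ f2 : ℝ → ℝ, f2 = fun s =>
      deriv (deriv φ) (r s) * (q s / r s) * (q s / r s)
        + deriv φ (r s) * ((‖w‖ ^ 2 * r s - q s * (q s / r s)) / r s ^ 2) := ⟨_, rfl⟩
  have hfd : ∀ s : ℝ, |s| ≤ 1 → HasDerivAt f (f1 s) s := by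
    intro s hs
    rw [hfdef, hf1def]
    exact ((hd1 (r s)).hasDerivAt).comp s (hrd s hs)
  have hqd : ∀ s : ℝ, HasDerivAt q (‖w‖ ^ 2) s := by
    intro s
    rw [hqdef]
    simpa using (((hasDerivAt_id s).mul_const (‖w‖ ^ 2)).const_add ⟪a, w⟫)
  have hf1d : ∀ s : ℝ, |s| ≤ 1 → HasDerivAt f1 (f2 s) s := by
    intro s hs
    rw [hf1def, hf2def]
    have ha1 : HasDerivAt (fun s => deriv φ (r s)) (deriv (deriv φ) (r s) * (q s / r s)) s :=
      ((hd2 (r s)).hasDerivAt).comp s (hrd s hs)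
    have ha2 : HasDerivAt (fun s => q s / r s)
        ((‖w‖ ^ 2 * r s - q s * (q s / r s)) / r s ^ 2) s :=
      (hqd s).div (hrd s hs) (ne_of_gt (hr0 s hs))
    exact ha1.mul ha2
  obtain ⟨F, hFdef⟩ : ∃ F : ℝ → ℝ, F = fun s => (1 - et ^ 2) * deriv φ (r s) / r s
      + et ^ 2 * deriv (deriv φ) (r s) := ⟨_, rfl⟩
  have het_pos : 0 < et := by
    rw [het]; exact div_pos hηδ₀ h1δ
  have hbound : ∀ s : ℝ, |s| ≤ 1 → f2 s ≤ F s * ‖w‖ ^ 2 := by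
    intro s hs
    have hR : 0 < r s := hr0 s hs
    have hP' : 0 ≤ deriv φ (r s) := hφ' _ hR.le
    have hP'' : deriv (deriv φ) (r s) ≤ 0 := hφ'' _ hR.le
    have hqlow : (1 - η - δ₀) * ‖a‖ * ‖w‖ ≤ |q s| := by
      have h1 : |⟪a, w⟫| ≤ |q s| + |s| * ‖w‖ ^ 2 := by
        have heq : ⟪a, w⟫ = q s - s * ‖w‖ ^ 2 := by rw [hqex]; ring
        calc |⟪a, w⟫| = |q s - s * ‖w‖ ^ 2| := by rw [← heq]
          _ ≤ |q s| + |s * ‖w‖ ^ 2| := abs_sub _ _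
          _ = |q s| + |s| * ‖w‖ ^ 2 := by rw [abs_mul, abs_of_nonneg (sq_nonneg ‖w‖)]
      have h2 : |s| * ‖w‖ ^ 2 ≤ ‖a‖ * δ₀ * ‖w‖ := by
        have h3 : |s| * ‖w‖ ≤ 1 * ‖w‖ := mul_le_mul_of_nonneg_right hs hW0
        nlinarith
      nlinarith [hw2]
    have hqet : et * (r s * ‖w‖) ≤ |q s| := by
      have hru := hrup s hs
      have h0 : r s * ‖w‖ ≤ (1 + δ₀) * ‖a‖ * ‖w‖ := by
        nlinarith [mul_le_mul_of_nonneg_right hru hW0]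
      have h1 := mul_le_mul_of_nonneg_left h0 het_pos.le
      have h2 : et * ((1 + δ₀) * ‖a‖ * ‖w‖) = (1 - η - δ₀) * ‖a‖ * ‖w‖ := by
        rw [het]; field_simp
      linarith [hqlow]
    have hc2 : et ^ 2 * ‖w‖ ^ 2 ≤ (q s / r s) ^ 2 := by
      rw [div_pow, le_div_iff₀ (pow_pos hR 2)]
      have habs : 0 ≤ et * (r s * ‖w‖) := by positivity
      have h3 : (et * (r s * ‖w‖)) ^ 2 ≤ |q s| ^ 2 := pow_le_pow_left₀ habs hqet 2
      rw [sq_abs] at h3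
      nlinarith [h3]
    have hsimp : (‖w‖ ^ 2 * r s - q s * (q s / r s)) / r s ^ 2
        = (‖w‖ ^ 2 - (q s / r s) ^ 2) / r s := by
      field_simp
    have e1 : deriv (deriv φ) (r s) * (q s / r s) * (q s / r s)
        ≤ et ^ 2 * deriv (deriv φ) (r s) * ‖w‖ ^ 2 := by
      have h := mul_le_mul_of_nonpos_left hc2 hP''
      calc deriv (deriv φ) (r s) * (q s / r s) * (q s / r s)
          = deriv (deriv φ) (r s) * (q s / r s) ^ 2 := by ring
        _ ≤ deriv (deriv φ) (r s) * (et ^ 2 * ‖w‖ ^ 2) := h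
        _ = et ^ 2 * deriv (deriv φ) (r s) * ‖w‖ ^ 2 := by ring
    have e2 : deriv φ (r s) * ((‖w‖ ^ 2 - (q s / r s) ^ 2) / r s)
        ≤ (1 - et ^ 2) * deriv φ (r s) / r s * ‖w‖ ^ 2 := by
      have hnum : deriv φ (r s) * (‖w‖ ^ 2 - (q s / r s) ^ 2)
          ≤ (1 - et ^ 2) * deriv φ (r s) * ‖w‖ ^ 2 := by nlinarith [hc2, hP']
      calc deriv φ (r s) * ((‖w‖ ^ 2 - (q s / r s) ^ 2) / r s)
          = deriv φ (r s) * (‖w‖ ^ 2 - (q s / r s) ^ 2) / r s := by ring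
        _ ≤ (1 - et ^ 2) * deriv φ (r s) * ‖w‖ ^ 2 / r s := div_le_div_of_nonneg_right hnum hR.le
        _ = (1 - et ^ 2) * deriv φ (r s) / r s * ‖w‖ ^ 2 := by ring
    simp only [hf2def, hFdef]
    rw [hsimp]
    have hexp : ((1 - et ^ 2) * deriv φ (r s) / r s + et ^ 2 * deriv (deriv φ) (r s)) * ‖w‖ ^ 2
        = (1 - et ^ 2) * deriv φ (r s) / r s * ‖w‖ ^ 2
          + et ^ 2 * deriv (deriv φ) (r s) * ‖w‖ ^ 2 := by ring
    rw [hexp]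
    linarith [e1, e2]
  have hFcont : ContinuousOn F (Icc (-1:ℝ) 1) := by
    have hrc : Continuous r := by
      rw [hrdef]; exact (continuous_const.add (continuous_id.smul continuous_const)).norm
    have hrne : ∀ s ∈ Icc (-1:ℝ) 1, r s ≠ 0 :=
      fun s hs => (hr0 s (abs_le.mpr ⟨hs.1, hs.2⟩)).ne'
    have h1 : ContinuousOn (fun s => deriv φ (r s)) (Icc (-1:ℝ) 1) :=
      ((hφ'c.continuous).comp hrc).continuousOn
    have h2 : ContinuousOn (fun s => deriv (deriv φ) (r s)) (Icc (-1:ℝ) 1) :=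
      (hφ''cont.comp hrc).continuousOn
    rw [hFdef]
    exact ((continuousOn_const.mul h1).div hrc.continuousOn hrne).add (continuousOn_const.mul h2)
  obtain ⟨M, hMdef⟩ : ∃ M : ℝ, M = ⨆ s : Icc (-1:ℝ) 1, F ↑s := ⟨_, rfl⟩
  have hbdd : BddAbove (Set.range fun s : Icc (-1:ℝ) 1 => F ↑s) := by
    rw [← Set.image_eq_range]
    exact (isCompact_Icc.image_of_continuousOn hFcont).bddAbove
  have hFM : ∀ s ∈ Icc (-1:ℝ) 1, F s ≤ M := by
    intro s hs
    rw [hMdef]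
    exact le_ciSup hbdd ⟨s, hs⟩
  have hWsq : (0:ℝ) ≤ ‖w‖ ^ 2 := sq_nonneg _
  have hf2K : ∀ s ∈ Icc (-1:ℝ) 1, f2 s ≤ M * ‖w‖ ^ 2 := by
    intro s hs
    have habs : |s| ≤ 1 := abs_le.mpr ⟨hs.1, hs.2⟩
    calc f2 s ≤ F s * ‖w‖ ^ 2 := hbound s habs
      _ ≤ M * ‖w‖ ^ 2 := mul_le_mul_of_nonneg_right (hFM s hs) hWsq
  have habs01 : ∀ s ∈ Icc (0:ℝ) 1, |s| ≤ 1 := fun s hs => abs_le.mpr ⟨by linarith [hs.1], hs.2⟩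
  obtain ⟨K, hKdef⟩ : ∃ K : ℝ, K = M * ‖w‖ ^ 2 := ⟨_, rfl⟩
  obtain ⟨g1, hg1def⟩ : ∃ g1 : ℝ → ℝ, g1 = fun s => f1 s - K * s := ⟨_, rfl⟩
  have hg1d : ∀ s : ℝ, |s| ≤ 1 → HasDerivAt g1 (f2 s - K) s := by
    intro s hs
    rw [hg1def]
    have h := (hf1d s hs).sub ((hasDerivAt_id s).const_mul K)
    simp only [id_eq, mul_one] at h
    exact h
  have hg1anti : AntitoneOn g1 (Icc (0:ℝ) 1) := by
    apply antitoneOn_of_deriv_nonpos (convex_Icc 0 1)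
    · intro s hs; exact (hg1d s (habs01 s hs)).continuousAt.continuousWithinAt
    · rw [interior_Icc]
      intro s hs
      exact (hg1d s (abs_le.mpr ⟨by linarith [hs.1], le_of_lt hs.2⟩)).differentiableAt.differentiableWithinAt
    · rw [interior_Icc]
      intro s hs
      rw [(hg1d s (abs_le.mpr ⟨by linarith [hs.1], le_of_lt hs.2⟩)).deriv]
      have hsm : s ∈ Icc (-1:ℝ) 1 := ⟨by linarith [hs.1], le_of_lt hs.2⟩
      have := hf2K s hsm
      rw [hKdef]
      linarith
  have hf1le : ∀ s ∈ Icc (0:ℝ) 1, f1 s - f1 0 - K * s ≤ 0 := by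
    intro s hs
    have h0 : (0:ℝ) ∈ Icc (0:ℝ) 1 := ⟨le_rfl, zero_le_one⟩
    have h := hg1anti h0 hs hs.1
    simp only [hg1def] at h
    have h' : f1 s - K * s ≤ f1 0 - K * 0 := h
    linarith
  obtain ⟨hh, hhdef⟩ : ∃ hh : ℝ → ℝ, hh = fun s => f s - s * f1 0 - K * s ^ 2 / 2 := ⟨_, rfl⟩
  have hhd : ∀ s : ℝ, |s| ≤ 1 → HasDerivAt hh (f1 s - f1 0 - K * s) s := by
    intro s hs
    rw [hhdef]
    have h1 : HasDerivAt (fun s : ℝ => s * f1 0) (f1 0) s := by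
      simpa using (hasDerivAt_id s).mul_const (f1 0)
    have h2 : HasDerivAt (fun s : ℝ => K * s ^ 2 / 2) (K * s) s := by
      have h := ((hasDerivAt_pow 2 s).const_mul K).div_const 2
      have e : K * (((2:ℕ):ℝ) * s ^ (2 - 1)) / 2 = K * s := by
        rw [show (2:ℕ) - 1 = 1 from rfl, pow_one]; push_cast; ring
      rw [e] at h
      exact h
    exact ((hfd s hs).sub h1).sub h2
  have hhanti : AntitoneOn hh (Icc (0:ℝ) 1) := by
    apply antitoneOn_of_deriv_nonpos (convex_Icc 0 1)
    · intro s hs; exact (hhd s (habs01 s hs)).continuousAt.continuousWithinAt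
    · rw [interior_Icc]
      intro s hs
      exact (hhd s (abs_le.mpr ⟨by linarith [hs.1], le_of_lt hs.2⟩)).differentiableAt.differentiableWithinAt
    · rw [interior_Icc]
      intro s hs
      rw [(hhd s (abs_le.mpr ⟨by linarith [hs.1], le_of_lt hs.2⟩)).deriv]
      exact hf1le s ⟨le_of_lt hs.1, le_of_lt hs.2⟩
  have hfinal : hh 1 ≤ hh 0 := hhanti ⟨le_rfl, zero_le_one⟩ ⟨zero_le_one, le_rfl⟩ zero_le_one
  have hfin2 : f 1 - f 0 - f1 0 ≤ K / 2 := by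
    have e0 : hh 0 = f 0 := by simp only [hhdef]; norm_num
    have e1 : hh 1 = f 1 - f1 0 - K / 2 := by simp only [hhdef]; norm_num
    rw [e0, e1] at hfinal
    linarith
  have e1 : f 1 = φ ‖a + w‖ := by simp [hfdef, hrex]
  have e2 : f 0 = φ ‖a‖ := by simp [hfdef, hrex]
  have e3 : f1 0 = deriv φ ‖a‖ * (‖a‖⁻¹ * ⟪a, w⟫) := by
    have hr0v : r 0 = ‖a‖ := by rw [hrex]; norm_num
    have hq0 : q 0 = ⟪a, w⟫ := by rw [hqex]; ring
    simp only [hf1def]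
    rw [hr0v, hq0]
    ring
  have hsup_eq : (⨆ s : Icc (-1:ℝ) 1,
      ((1 - et ^ 2) * deriv φ ‖a + (s : ℝ) • w‖ / ‖a + (s : ℝ) • w‖
        + et ^ 2 * deriv (deriv φ) ‖a + (s : ℝ) • w‖)) = M := by
    rw [hMdef]
    congr 1
    funext s
    simp only [hFdef, hrex]
  rw [hsup_eq, ← e1, ← e2, ← e3, ← hKdef]
  linarith [hfin2]

lemma isup_neg_Icc (G : ℝ → ℝ) :
    (⨆ s : Icc (-1:ℝ) 1, G (-(s:ℝ))) = ⨆ s : Icc (-1:ℝ) 1, G (s:ℝ) := by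
  have hrange : (Set.range fun s : Icc (-1:ℝ) 1 => G (-(s:ℝ)))
      = Set.range fun s : Icc (-1:ℝ) 1 => G (s:ℝ) := by
    ext x
    constructor
    · rintro ⟨⟨s, hs⟩, rfl⟩
      exact ⟨⟨-s, ⟨by linarith [hs.2], by linarith [hs.1]⟩⟩, rfl⟩
    · rintro ⟨⟨s, hs⟩, rfl⟩
      exact ⟨⟨-s, ⟨by linarith [hs.2], by linarith [hs.1]⟩⟩, by simp⟩
  show sSup (Set.range fun s : Icc (-1:ℝ) 1 => G (-(s:ℝ)))
      = sSup (Set.range fun s : Icc (-1:ℝ) 1 => G (s:ℝ))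
  rw [hrange]

set_option maxHeartbeats 1600000 in
/-- **Concave estimate on the cone for general nonlocal operators (Lemma est_NL2).**
In the maximum setup (`ψ(x,y) = u(x) − v(y) − φ(‖x−y‖)` maximal at `(x̄,ȳ)`, `x̄ ≠ ȳ`),
with `a = x̄ − ȳ`, `p = φ'(‖a‖)â`, `δ = ‖a‖δ₀` and `η̃ = (1−η−δ₀)/(1+δ₀)`, the difference
of the nonlocal terms over the cone `C_{η,δ}(a)` is bounded by
`(1/2)∫_{C_{η,δ}(a)} sup_{|s|≤1} ((1−η̃²)φ'(‖a+sz‖)/‖a+sz‖ + η̃²φ''(‖a+sz‖)) ‖z‖² d(μ₁+μ₂)`. -/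
theorem cone_estimate_general_nonlocal {d : ℕ}
    (u v : EuclideanSpace ℝ (Fin d) → ℝ)
    (hum : Measurable u) (hvm : Measurable v)
    (hub : ∃ C, ∀ x, |u x| ≤ C) (hvb : ∃ C, ∀ x, |v x| ≤ C)
    (φ : ℝ → ℝ) (hφ : ContDiff ℝ 2 φ)
    (hφ' : ∀ t : ℝ, 0 ≤ t → 0 ≤ deriv φ t)
    (hφ'' : ∀ t : ℝ, 0 ≤ t → deriv (deriv φ) t ≤ 0)
    (xb yb : EuclideanSpace ℝ (Fin d)) (hxy : xb ≠ yb)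
    (hmax : ∀ x y, u x - v y - φ ‖x - y‖ ≤ u xb - v yb - φ ‖xb - yb‖)
    (δ₀ η : ℝ) (hδ₀ : δ₀ ∈ Ioo (0:ℝ) 1) (hη : η ∈ Ioo (0:ℝ) 1)
    (hηδ₀ : 0 < 1 - η - δ₀)
    (a : EuclideanSpace ℝ (Fin d)) (ha : a = xb - yb)
    (p : EuclideanSpace ℝ (Fin d)) (hp : p = deriv φ ‖a‖ • (‖a‖⁻¹ • a))
    (δ eta_t : ℝ) (hδ : δ = ‖a‖ * δ₀) (heta_t : eta_t = (1 - η - δ₀) / (1 + δ₀))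
    (Cone : Set (EuclideanSpace ℝ (Fin d)))
    (hCone : Cone = {z | ‖z‖ ≤ δ ∧ (1 - η) * ‖z‖ * ‖a‖ ≤ abs ⟪a, z⟫})
    (μ₁ μ₂ : Measure (EuclideanSpace ℝ (Fin d)))
    (g : EuclideanSpace ℝ (Fin d) → ℝ)
    (hg : ∀ z, g z = (⨆ s : Icc (-1:ℝ) 1,
        ((1 - eta_t ^ 2) * deriv φ ‖a + (s : ℝ) • z‖ / ‖a + (s : ℝ) • z‖
          + eta_t ^ 2 * deriv (deriv φ) ‖a + (s : ℝ) • z‖)) * ‖z‖ ^ 2)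
    (hint1 : IntegrableOn (fun z => u (xb + z) - u xb - ⟪p, z⟫) Cone μ₁)
    (hint2 : IntegrableOn (fun z => v (yb + z) - v yb - ⟪p, z⟫) Cone μ₂)
    (hint3 : IntegrableOn g Cone (μ₁ + μ₂)) :
    (∫ z in Cone, (u (xb + z) - u xb - ⟪p, z⟫) ∂μ₁)
      - ∫ z in Cone, (v (yb + z) - v yb - ⟪p, z⟫) ∂μ₂
    ≤ (1 / 2) * ∫ z in Cone, g z ∂(μ₁ + μ₂) := by
  have ha0 : a ≠ 0 := by rw [ha]; exact sub_ne_zero.mpr hxy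
  have hA : (0:ℝ) < ‖a‖ := norm_pos_iff.mpr ha0
  -- inner product with p
  have hip : ∀ z : EuclideanSpace ℝ (Fin d),
      ⟪p, z⟫ = deriv φ ‖a‖ * (‖a‖⁻¹ * ⟪a, z⟫) := by
    intro z
    rw [hp, real_inner_smul_left, real_inner_smul_left]
  -- measurability of the cone
  have hCm : MeasurableSet Cone := by
    rw [hCone]
    have heq : {z : EuclideanSpace ℝ (Fin d) | ‖z‖ ≤ δ ∧ (1 - η) * ‖z‖ * ‖a‖ ≤ |⟪a, z⟫|}
        = {z : EuclideanSpace ℝ (Fin d) | ‖z‖ ≤ δ}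
          ∩ {z : EuclideanSpace ℝ (Fin d) | (1 - η) * ‖z‖ * ‖a‖ ≤ |⟪a, z⟫|} := rfl
    rw [heq]
    have h1 : IsClosed {z : EuclideanSpace ℝ (Fin d) | ‖z‖ ≤ δ} :=
      isClosed_le continuous_norm continuous_const
    have h2 : IsClosed {z : EuclideanSpace ℝ (Fin d) | (1 - η) * ‖z‖ * ‖a‖ ≤ |⟪a, z⟫|} := by
      apply isClosed_le
      · exact (continuous_const.mul continuous_norm).mul continuous_const
      · exact (continuous_const.inner continuous_id).abs
    exact (h1.inter h2).measurableSet
  -- pointwise estimate for the u-part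
  have hkey1 : ∀ z ∈ Cone, u (xb + z) - u xb - ⟪p, z⟫ ≤ (1/2) * g z := by
    intro z hz
    rw [hCone] at hz
    obtain ⟨hz1, hz2⟩ := hz
    have hw1 : ‖z‖ ≤ ‖a‖ * δ₀ := by rw [← hδ]; exact hz1
    have haux := aux_cone φ hφ hφ' hφ'' a z ha0 δ₀ η eta_t hδ₀ hη hηδ₀ heta_t hw1 hz2
    have hmax1 : u (xb + z) - u xb ≤ φ ‖a + z‖ - φ ‖a‖ := by
      have h := hmax (xb + z) yb
      rw [show xb + z - yb = a + z from by rw [ha]; abel, ← ha] at h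
      linarith
    rw [hg z]
    calc u (xb + z) - u xb - ⟪p, z⟫ ≤ φ ‖a + z‖ - φ ‖a‖ - ⟪p, z⟫ := by linarith
      _ = φ ‖a + z‖ - φ ‖a‖ - deriv φ ‖a‖ * (‖a‖⁻¹ * ⟪a, z⟫) := by rw [hip z]
      _ ≤ (1/2) * ((⨆ s : Icc (-1:ℝ) 1,
          ((1 - eta_t ^ 2) * deriv φ ‖a + (s : ℝ) • z‖ / ‖a + (s : ℝ) • z‖
            + eta_t ^ 2 * deriv (deriv φ) ‖a + (s : ℝ) • z‖)) * ‖z‖ ^ 2) := haux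
  -- pointwise estimate for the v-part
  have hkey2 : ∀ z ∈ Cone, -((1/2) * g z) ≤ v (yb + z) - v yb - ⟪p, z⟫ := by
    intro z hz
    rw [hCone] at hz
    obtain ⟨hz1, hz2⟩ := hz
    have hw1 : ‖(-z : EuclideanSpace ℝ (Fin d))‖ ≤ ‖a‖ * δ₀ := by
      rw [norm_neg, ← hδ]; exact hz1
    have hw2 : (1 - η) * ‖(-z : EuclideanSpace ℝ (Fin d))‖ * ‖a‖ ≤ |⟪a, -z⟫| := by
      rw [norm_neg, inner_neg_right, abs_neg]; exact hz2
    have haux := aux_cone φ hφ hφ' hφ'' a (-z) ha0 δ₀ η eta_t hδ₀ hη hηδ₀ heta_t hw1 hw2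
    have hbody : ∀ s : ℝ, a + s • (-z) = a + (-s) • z := by
      intro s; rw [smul_neg, neg_smul]
    simp_rw [hbody, norm_neg, inner_neg_right] at haux
    have hsym := isup_neg_Icc (fun t => (1 - eta_t ^ 2) * deriv φ ‖a + t • z‖ / ‖a + t • z‖
        + eta_t ^ 2 * deriv (deriv φ) ‖a + t • z‖)
    rw [hsym] at haux
    have hmax2 : φ ‖a‖ - φ ‖a + (-1 : ℝ) • z‖ ≤ v (yb + z) - v yb := by
      have h := hmax xb (yb + z)
      rw [show xb - (yb + z) = a + (-1 : ℝ) • z from by rw [ha]; simp; abel, ← ha] at h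
      linarith
    have hneg1 : a + (-1 : ℝ) • z = a + -z := by simp
    rw [hg z, hip z]
    have hr : deriv φ ‖a‖ * (‖a‖⁻¹ * -⟪a, z⟫) = -(deriv φ ‖a‖ * (‖a‖⁻¹ * ⟪a, z⟫)) := by ring
    rw [hneg1] at hmax2
    rw [hr] at haux
    linarith [haux, hmax2]
  -- integrability splitting
  have hint3' : IntegrableOn g Cone μ₁ ∧ IntegrableOn g Cone μ₂ := by
    have h := hint3
    rw [IntegrableOn, Measure.restrict_add] at h
    exact ⟨(integrable_add_measure.mp h).1, (integrable_add_measure.mp h).2⟩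
  have hsplit : ∫ z in Cone, g z ∂(μ₁ + μ₂)
      = (∫ z in Cone, g z ∂μ₁) + ∫ z in Cone, g z ∂μ₂ := by
    rw [Measure.restrict_add]
    exact integral_add_measure hint3'.1 hint3'.2
  have I1 : ∫ z in Cone, (u (xb + z) - u xb - ⟪p, z⟫) ∂μ₁
      ≤ ∫ z in Cone, (1/2) * g z ∂μ₁ :=
    setIntegral_mono_on hint1 (hint3'.1.const_mul _) hCm hkey1
  have I2 : ∫ z in Cone, (-((1/2) * g z)) ∂μ₂
      ≤ ∫ z in Cone, (v (yb + z) - v yb - ⟪p, z⟫) ∂μ₂ :=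
    setIntegral_mono_on (hint3'.2.const_mul _).neg hint2 hCm hkey2
  have e1 : ∫ z in Cone, (1/2) * g z ∂μ₁ = (1/2) * ∫ z in Cone, g z ∂μ₁ :=
    integral_const_mul _ _
  have e2 : ∫ z in Cone, (-((1/2) * g z)) ∂μ₂ = -((1/2) * ∫ z in Cone, g z ∂μ₂) := by
    rw [integral_neg, integral_const_mul]
  rw [hsplit]
  rw [e1] at I1
  rw [e2] at I2
  linarith [I1, I2]
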